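/- For every noncommutative polynomial f in finitely many variables over k (an element of the free associative algebra over k), f vanishes under every substitution of right multiplication operators R_{D_1},…,R_{D_m} (with D_1,…,D_m derivations of P_n) if and only if f vanishes under every substitution of n×n matrices over k; that is, the polynomial identities of the right multiplication algebra of the left-symmetric algebra of derivations coincide with the polynomial identities of the matrix algebra M_n(k). -/

import Mathlib

open MvPolynomial

/-- `Pn k n` is the polynomial algebra `k[x₁,…,xₙ]`. -/
abbrev Pn (k : Type*) [CommRing k] (n : ℕ) := MvPolynomial (Fin n) k

/-- `Der k n` is the space of `k`-linear derivations of `Pn k n`. -/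
abbrev Der (k : Type*) [CommRing k] (n : ℕ) := Derivation k (Pn k n) (Pn k n)

variable {k : Type*} [Field k] [CharZero k] {n : ℕ}

/-- The left-symmetric product of derivations: `(D · E)(xᵢ) = D (E xᵢ)`. -/
noncomputable def lsMul (D E : Der k n) : Der k n :=
  MvPolynomial.mkDerivation k (fun i => D (E (MvPolynomial.X i)))

/-- The Jacobian matrix of a derivation: `(J D)ᵢⱼ = ∂(D xᵢ)/∂xⱼ`. -/
noncomputable def jac (D : Der k n) : Matrix (Fin n) (Fin n) (Pn k n) :=
  Matrix.of fun i j => MvPolynomial.pderiv j (D (MvPolynomial.X i))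

/-- The divergence of a derivation. -/
noncomputable def divg (D : Der k n) : Pn k n :=
  ∑ i, MvPolynomial.pderiv i (D (MvPolynomial.X i))

/-- Right powers: `rpow D 1 = D`, `rpow D (r+1) = (rpow D r) · D` (for `r ≥ 1`). -/
noncomputable def rpow (D : Der k n) : ℕ → Der k n
  | 0 => D
  | 1 => D
  | (r+2) => lsMul (rpow D (r+1)) D

/-- Left powers: `lpow D 1 = D`, `lpow D (r+1) = D · (lpow D r)` (for `r ≥ 1`). -/
noncomputable def lpow (D : Der k n) : ℕ → Der k n
  | 0 => D
  | 1 => D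
  | (r+2) => lsMul D (lpow D (r+1))

/-- Right multiplication operator `R_D : E ↦ E · D`, as a `k`-linear endomorphism. -/
noncomputable def rmulOp (D : Der k n) : Der k n →ₗ[k] Der k n where
  toFun E := lsMul E D
  map_add' E₁ E₂ := by
    show (MvPolynomial.mkDerivationEquiv k) _ =
      (MvPolynomial.mkDerivationEquiv k) _ + (MvPolynomial.mkDerivationEquiv k) _
    rw [← map_add]
    exact congrArg _ (funext fun i => by simp)
  map_smul' c E := by
    show (MvPolynomial.mkDerivationEquiv k) _ = c • (MvPolynomial.mkDerivationEquiv k) _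
    rw [← map_smul]
    exact congrArg _ (funext fun i => by simp)

/-- Left multiplication operator `L_D : E ↦ D · E`, as a `k`-linear endomorphism. -/
noncomputable def lmulOp (D : Der k n) : Der k n →ₗ[k] Der k n where
  toFun E := lsMul D E
  map_add' E₁ E₂ := by
    show (MvPolynomial.mkDerivationEquiv k) _ =
      (MvPolynomial.mkDerivationEquiv k) _ + (MvPolynomial.mkDerivationEquiv k) _
    rw [← map_add]
    exact congrArg _ (funext fun i => by simp)
  map_smul' c E := by
    show (MvPolynomial.mkDerivationEquiv k) _ = c • (MvPolynomial.mkDerivationEquiv k) _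
    rw [← map_smul]
    exact congrArg _ (funext fun i => by simp)

/-- `Zc F i a` is the coefficient of `t^i` in the image of `a` under `xⱼ ↦ xⱼ + t·fⱼ`. -/
noncomputable def Zc (F : Fin n → Pn k n) (i : ℕ) (a : Pn k n) : Pn k n :=
  (MvPolynomial.aeval
    (fun j => Polynomial.C (MvPolynomial.X j) + Polynomial.C (F j) * Polynomial.X :
      Fin n → Polynomial (Pn k n)) a).coeff i

/-- `PsiOp F m a = Σ (−1)^{k−1} r_k Z_{r₁}(Z_{r₂}(⋯ Z_{r_k}(a)⋯))`, summed over
compositions `(r₁,…,r_k)` of `m`. -/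
noncomputable def PsiOp (F : Fin n → Pn k n) (m : ℕ) (a : Pn k n) : Pn k n :=
  ∑ c : Composition m,
    (-1 : Pn k n) ^ (c.length - 1) * ((c.blocks.getLastD 0 : ℕ) : Pn k n) *
      (c.blocks.foldr (fun r b => Zc F r b) a)

section AuxiliaryForStatement5

/-- The identification of derivations with vectors of polynomials. -/
noncomputable def derEquiv : (Fin n → Pn k n) ≃ₗ[k] Der k n :=
  MvPolynomial.mkDerivationEquiv k

lemma derEquiv_apply (v : Fin n → Pn k n) :
    (derEquiv (k := k) (n := n)) v = MvPolynomial.mkDerivation k v := rfl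

lemma derEquiv_symm_apply (D : Der k n) (i : Fin n) :
    (derEquiv (k := k) (n := n)).symm D i = D (MvPolynomial.X i) := rfl

lemma derivation_sum_apply {ι : Type*} (s : Finset ι)
    (g : ι → Derivation k (Pn k n) (Pn k n)) (p : Pn k n) :
    (∑ j ∈ s, g j) p = ∑ j ∈ s, g j p := by
  classical
  induction s using Finset.induction_on with
  | empty => simp
  | insert _ _ hnotmem ih =>
    rw [Finset.sum_insert hnotmem, Finset.sum_insert hnotmem, Derivation.add_apply, ih]

/-- Chain rule for derivations of the polynomial algebra. -/
lemma der_apply (D : Der k n) (p : Pn k n) :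
    D p = ∑ j, MvPolynomial.pderiv j p * D (MvPolynomial.X j) := by
  have h : D = ∑ j, D (MvPolynomial.X j) •
      (MvPolynomial.pderiv j : Derivation k (Pn k n) (Pn k n)) := by
    apply MvPolynomial.derivation_ext
    intro i
    rw [derivation_sum_apply]
    simp [Derivation.smul_apply, MvPolynomial.pderiv_X, Pi.single_apply, smul_eq_mul]
  calc D p = (∑ j, D (MvPolynomial.X j) •
      (MvPolynomial.pderiv j : Derivation k (Pn k n) (Pn k n))) p := by rw [← h]
    _ = ∑ j, MvPolynomial.pderiv j p * D (MvPolynomial.X j) := by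
        rw [derivation_sum_apply]
        simp [Derivation.smul_apply, smul_eq_mul, mul_comm]

/-- Matrices over `Pn k n` act on derivations through `derEquiv`, as a `k`-algebra
homomorphism into the endomorphism algebra. -/
noncomputable def matToEnd : Matrix (Fin n) (Fin n) (Pn k n) →ₐ[k] Module.End k (Der k n) where
  toFun M := derEquiv.toLinearMap ∘ₗ (M.mulVecLin.restrictScalars k) ∘ₗ
      derEquiv.symm.toLinearMap
  map_one' := by
    apply LinearMap.ext; intro E
    simp only [LinearMap.coe_comp, LinearMap.coe_restrictScalars, Function.comp_apply,
      LinearEquiv.coe_coe, Matrix.mulVecLin_one, LinearMap.id_coe, id_eq,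
      LinearEquiv.apply_symm_apply, Module.End.one_apply]
  map_mul' M N := by
    apply LinearMap.ext; intro E
    simp only [Matrix.mulVecLin_mul, LinearMap.coe_comp, LinearMap.coe_restrictScalars,
      Function.comp_apply, LinearEquiv.coe_coe, LinearEquiv.symm_apply_apply,
      Module.End.mul_apply]
  map_zero' := by
    apply LinearMap.ext; intro E
    simp [Matrix.mulVecLin_zero]
  map_add' M N := by
    apply LinearMap.ext; intro E
    simp [Matrix.mulVecLin_add]
  commutes' c := by
    apply LinearMap.ext; intro E
    have h1 : (algebraMap k (Matrix (Fin n) (Fin n) (Pn k n)) c).mulVecLin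
        (derEquiv.symm E) = c • (derEquiv.symm E) := by
      funext i
      simp [Matrix.mulVecLin_apply, Matrix.mulVec, dotProduct,
        Matrix.algebraMap_matrix_apply, ite_mul, Finset.sum_ite_eq,
        MvPolynomial.smul_eq_C_mul]
    simp only [LinearMap.coe_comp, LinearMap.coe_restrictScalars, Function.comp_apply,
      LinearEquiv.coe_coe, Module.algebraMap_end_apply]
    rw [h1, map_smul, LinearEquiv.apply_symm_apply]

lemma matToEnd_apply (M : Matrix (Fin n) (Fin n) (Pn k n)) (E : Der k n) :
    matToEnd M E = derEquiv (M.mulVecLin (derEquiv.symm E)) := rfl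

lemma rmulOp_eq_matToEnd (D : Der k n) :
    (rmulOp D : Module.End k (Der k n)) = matToEnd (jac D) := by
  apply LinearMap.ext; intro E
  show lsMul E D = _
  apply MvPolynomial.derivation_ext
  intro i
  have hL : lsMul E D (MvPolynomial.X i) = E (D (MvPolynomial.X i)) :=
    MvPolynomial.mkDerivation_X _ _ _
  have hR : matToEnd (jac D) E (MvPolynomial.X i)
      = ∑ j, MvPolynomial.pderiv j (D (MvPolynomial.X i)) * E (MvPolynomial.X j) := by
    rw [matToEnd_apply, derEquiv_apply, MvPolynomial.mkDerivation_X]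
    simp [Matrix.mulVecLin_apply, Matrix.mulVec, dotProduct, jac,
      derEquiv_symm_apply]
  rw [hL, hR, ← der_apply E (D (MvPolynomial.X i))]

lemma matToEnd_eq_zero {M : Matrix (Fin n) (Fin n) (Pn k n)}
    (h : matToEnd M = 0) : M = 0 := by
  refine Matrix.ext fun i j => ?_
  have h1 := congrArg (fun T : Module.End k (Der k n) =>
    derEquiv.symm (T (derEquiv (Pi.single j 1)))) h
  simp only [matToEnd_apply, LinearEquiv.symm_apply_apply, LinearMap.zero_apply,
    map_zero] at h1
  have h2 := congrFun h1 i
  simpa [Matrix.mulVecLin_apply, Matrix.mulVec_single_one] using h2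

lemma algHom_lift_comm {m : ℕ} {S T : Type*} [Semiring S] [Algebra k S] [Semiring T]
    [Algebra k T] (ψ : S →ₐ[k] T) (g : Fin m → S) (f : FreeAlgebra k (Fin m)) :
    ψ (FreeAlgebra.lift k g f) = FreeAlgebra.lift k (fun i => ψ (g i)) f := by
  have h : ψ.comp (FreeAlgebra.lift k g) = FreeAlgebra.lift k (fun i => ψ (g i)) :=
    FreeAlgebra.hom_ext (funext fun i => by simp)
  exact DFunLike.congr_fun h f

end AuxiliaryForStatement5

/-- the polynomial identities of the right multiplication algebra of the
left-symmetric algebra of derivations coincide with those of `Mₙ(k)`. -/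
theorem rightMultiplication_identities_eq_matrix_identities (hn : 1 ≤ n)
    (m : ℕ) (f : FreeAlgebra k (Fin m)) :
    (∀ D : Fin m → Der k n,
        FreeAlgebra.lift k (fun i => (rmulOp (D i) : Module.End k (Der k n))) f = 0) ↔
      (∀ M : Fin m → Matrix (Fin n) (Fin n) k, FreeAlgebra.lift k M f = 0) := by
  have key : ∀ D : Fin m → Der k n,
      FreeAlgebra.lift k (fun i => (rmulOp (D i) : Module.End k (Der k n))) f
        = matToEnd (FreeAlgebra.lift k (fun i => jac (D i)) f) := by
    intro D
    rw [algHom_lift_comm matToEnd]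
    have he : (fun i => (rmulOp (D i) : Module.End k (Der k n)))
        = fun i => matToEnd (jac (D i)) := funext fun i => rmulOp_eq_matToEnd (D i)
    rw [he]
  constructor
  · intro h M
    set D : Fin m → Der k n := fun i =>
      MvPolynomial.mkDerivation k (fun p => ∑ q, M i p q • MvPolynomial.X q) with hD
    have hjac : ∀ i, jac (D i) = (M i).map (algebraMap k (Pn k n)) := by
      intro i
      ext p q
      simp [jac, hD, MvPolynomial.mkDerivation_X, map_sum, MvPolynomial.pderiv_X,
        Pi.single_apply, MvPolynomial.algebraMap_eq, Matrix.map_apply,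
        MvPolynomial.smul_eq_C_mul, Finset.sum_ite_eq', mul_ite, mul_one, mul_zero]
    have h1 : FreeAlgebra.lift k (fun i => jac (D i)) f = 0 := by
      apply matToEnd_eq_zero
      rw [← key D]
      exact h D
    have h2 : (Algebra.ofId k (Pn k n)).mapMatrix (FreeAlgebra.lift k M f)
        = FreeAlgebra.lift k (fun i => jac (D i)) f := by
      rw [algHom_lift_comm]
      have he : (fun i => (Algebra.ofId k (Pn k n)).mapMatrix (M i))
          = fun i => jac (D i) := by
        funext i
        rw [hjac i]
        rfl
      rw [he]
    have hinj : Function.Injective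
        ((Algebra.ofId k (Pn k n)).mapMatrix :
          Matrix (Fin n) (Fin n) k →ₐ[k] Matrix (Fin n) (Fin n) (Pn k n)) := by
      intro A B hAB
      ext i j
      have := congrFun (congrFun (congrArg (fun (T : Matrix (Fin n) (Fin n) (Pn k n)) =>
        (T : Fin n → Fin n → Pn k n)) hAB) i) j
      simp only [AlgHom.mapMatrix_apply, Matrix.map_apply] at this
      exact MvPolynomial.C_injective (Fin n) k (by simpa [Algebra.ofId_apply,
        MvPolynomial.algebraMap_eq] using this)
    apply hinj
    rw [h2, h1, map_zero]
  · intro h D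
    rw [key D]
    suffices hz : FreeAlgebra.lift k (fun i => jac (D i)) f = 0 by
      rw [hz, map_zero]
    set B := MvPolynomial (Fin m × Fin n × Fin n) k with hB
    set G : Fin m → Matrix (Fin n) (Fin n) B := fun i =>
      Matrix.of fun p q => MvPolynomial.X (i, p, q) with hG
    have hg : FreeAlgebra.lift k G f = 0 := by
      refine Matrix.ext fun p q => ?_
      rw [Matrix.zero_apply]
      apply MvPolynomial.funext
      intro v
      rw [map_zero]
      have h3 : (MvPolynomial.aeval v : B →ₐ[k] k).mapMatrix (FreeAlgebra.lift k G f)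
          = FreeAlgebra.lift k (fun i => Matrix.of fun p q => v (i, p, q)) f := by
        rw [algHom_lift_comm]
        have he : (fun i => (MvPolynomial.aeval v : B →ₐ[k] k).mapMatrix (G i))
            = fun i => (Matrix.of fun p q => v (i, p, q)) := by
          funext i
          refine Matrix.ext fun p' q' => ?_
          simp [hG]
        rw [he]
      have h4 : (MvPolynomial.aeval v : B →ₐ[k] k).mapMatrix
          (FreeAlgebra.lift k G f) = 0 := by rw [h3]; exact h _
      have h5 := congrFun (congrFun (congrArg (fun (T : Matrix (Fin n) (Fin n) k) =>
        (T : Fin n → Fin n → k)) h4) p) q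
      simp only [AlgHom.mapMatrix_apply, Matrix.map_apply, Matrix.zero_apply] at h5
      have h7 : MvPolynomial.eval v ((FreeAlgebra.lift k G f) p q)
          = MvPolynomial.aeval v ((FreeAlgebra.lift k G f) p q) := by
        rw [← MvPolynomial.coe_aeval_eq_eval]; rfl
      rw [h7]
      exact h5
    have h6 : (MvPolynomial.aeval
        (fun t : Fin m × Fin n × Fin n => jac (D t.1) t.2.1 t.2.2) :
          B →ₐ[k] Pn k n).mapMatrix (FreeAlgebra.lift k G f)
        = FreeAlgebra.lift k (fun i => jac (D i)) f := by
      rw [algHom_lift_comm]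
      have he : (fun i => (MvPolynomial.aeval
          (fun t : Fin m × Fin n × Fin n => jac (D t.1) t.2.1 t.2.2) :
            B →ₐ[k] Pn k n).mapMatrix (G i)) = fun i => jac (D i) := by
        funext i
        refine Matrix.ext fun p q => ?_
        simp [hG]
      rw [he]
    rw [← h6, hg, map_zero]
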